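/- Let g ≥ 1 and let τ be a g × g complex matrix which is symmetric and whose imaginary part Im τ — the real g × g matrix with entries Im(τ_{ij}) — is positive definite. Consider the set H := {z ∈ ℂ^g : exp(z_j) is real and exp((τz)_j) is real for all j = 1,…,g} (equivalently, H = {z ∈ ℂ^g : Im(z_j) ∈ πℤ and Im((τz)_j) ∈ πℤ for all j}, an additive subgroup of ℂ^g). Then H is a discrete subset of ℂ^g: every point of H is isolated in H; equivalently, there exists ε > 0 such that the only z ∈ H with ‖z‖ < ε is z = 0. -/

import Mathlib

open Complex Matrix

private lemma exp_im_zero_iff' {w : ℂ} (h : (Complex.exp w).im = 0) :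
    ∃ n : ℤ, w.im = n * Real.pi := by
  rw [Complex.exp_im] at h
  have hsin : Real.sin w.im = 0 := by
    rcases mul_eq_zero.1 h with h' | h'
    · exact absurd h' (Real.exp_ne_zero _)
    · exact h'
  obtain ⟨n, hn⟩ := Real.sin_eq_zero_iff.1 hsin
  exact ⟨n, hn.symm⟩

private lemma small_pi_int_zero {x : ℝ} (hx : |x| < Real.pi)
    (h : ∃ n : ℤ, x = n * Real.pi) : x = 0 := by
  obtain ⟨n, hn⟩ := h
  have hn0 : n = 0 := by
    by_contra hne
    have h1 : (1 : ℝ) ≤ |(n : ℝ)| := by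
      have h : (1 : ℤ) ≤ |n| := Int.one_le_abs hne
      rw [← Int.cast_abs]
      exact_mod_cast h
    have : Real.pi ≤ |x| := by
      rw [hn, abs_mul, abs_of_pos Real.pi_pos]
      nlinarith [Real.pi_pos]
    linarith
  simp [hn, hn0]

private lemma exp_sub_im_zero {a b : ℂ} (ha : (Complex.exp a).im = 0)
    (hb : (Complex.exp b).im = 0) : (Complex.exp (a - b)).im = 0 := by
  rw [Complex.exp_sub, Complex.div_im, ha, hb]
  ring

private lemma key_zero (g : ℕ) (τ : Matrix (Fin g) (Fin g) ℂ)
    (hpos : (Matrix.of fun i j => (τ i j).im).PosDef) :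
    ∃ ε > (0 : ℝ), ∀ z : Fin g → ℂ,
        (∀ j, (Complex.exp (z j)).im = 0 ∧ (Complex.exp (τ.mulVec z j)).im = 0) →
        ‖z‖ < ε → z = 0 := by
  set B : Matrix (Fin g) (Fin g) ℝ := Matrix.of fun i j => (τ i j).im with hB
  set K : ℝ := (∑ i, ∑ j, |B i j|) + 1 with hK
  have hKpos : 0 < K := by
    have : (0:ℝ) ≤ ∑ i, ∑ j, |B i j| := by positivity
    linarith
  refine ⟨min Real.pi (Real.pi / K), lt_min Real.pi_pos (div_pos Real.pi_pos hKpos), ?_⟩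
  intro z hz hlt
  have hzπ : ‖z‖ < Real.pi := lt_of_lt_of_le hlt (min_le_left _ _)
  have hzK : ‖z‖ < Real.pi / K := lt_of_lt_of_le hlt (min_le_right _ _)
  have hznn : (0:ℝ) ≤ ‖z‖ := norm_nonneg _
  -- imaginary parts vanish
  have him : ∀ j, (z j).im = 0 := by
    intro j
    refine small_pi_int_zero ?_ (exp_im_zero_iff' (hz j).1)
    calc |(z j).im| ≤ ‖z j‖ := Complex.abs_im_le_norm _
      _ ≤ ‖z‖ := norm_le_pi_norm z j
      _ < Real.pi := hzπ
  set x : Fin g → ℝ := fun i => (z i).re with hx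
  have hxb : ∀ i, |x i| ≤ ‖z‖ := fun i =>
    le_trans (Complex.abs_re_le_norm _) (norm_le_pi_norm z i)
  -- Im(τ z) = B x
  have himτ : ∀ j, (τ.mulVec z j).im = B.mulVec x j := by
    intro j
    simp only [Matrix.mulVec, dotProduct, Complex.im_sum, Complex.mul_im]
    refine Finset.sum_congr rfl fun i _ => ?_
    simp [him i, hB, hx]
  -- B x = 0
  have hBx : B.mulVec x = 0 := by
    funext j
    have hbound : |B.mulVec x j| < Real.pi := by
      have h1 : |B.mulVec x j| ≤ ∑ i, |B j i| * ‖z‖ := by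
        simp only [Matrix.mulVec, dotProduct]
        refine (Finset.abs_sum_le_sum_abs _ _).trans ?_
        refine Finset.sum_le_sum fun i _ => ?_
        rw [abs_mul]
        exact mul_le_mul_of_nonneg_left (hxb i) (abs_nonneg _)
      have h2 : (∑ i, |B j i| * ‖z‖) = (∑ i, |B j i|) * ‖z‖ := by
        rw [Finset.sum_mul]
      have h3 : (∑ i, |B j i|) ≤ K := by
        have h := Finset.single_le_sum (f := fun i : Fin g => ∑ i', |B i i'|)
            (fun i _ => Finset.sum_nonneg fun i' _ => abs_nonneg (B i i')) (Finset.mem_univ j)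
        replace h : (∑ i', |B j i'|) ≤ ∑ i, ∑ i', |B i i'| := h
        linarith
      have h4 : (∑ i, |B j i|) * ‖z‖ ≤ K * ‖z‖ :=
        mul_le_mul_of_nonneg_right h3 hznn
      have h5 : K * ‖z‖ < K * (Real.pi / K) :=
        mul_lt_mul_of_pos_left hzK hKpos
      rw [mul_div_cancel₀ _ (ne_of_gt hKpos)] at h5
      linarith
    have hint : ∃ n : ℤ, B.mulVec x j = n * Real.pi := by
      have := exp_im_zero_iff' (hz j).2
      rwa [himτ j] at this
    simpa using small_pi_int_zero hbound hint
  -- x = 0 by positive definiteness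
  have hx0 : x = 0 := by
    by_contra hxne
    have := hpos.dotProduct_mulVec_pos hxne
    rw [hBx] at this
    simp at this
  -- conclude
  funext j
  apply Complex.ext
  · exact congrFun hx0 j
  · exact him j

/-- For `τ` in the Siegel upper half space, the additive subgroup
`H = {z ∈ ℂ^g : exp(z_j) ∈ ℝ and exp((τz)_j) ∈ ℝ for all j}` is discrete:
every point of `H` is isolated in `H`; equivalently, there is `ε > 0` such that
the only `z ∈ H` with `‖z‖ < ε` is `z = 0`. -/
theorem siegel_exp_real_locus_discrete
    (g : ℕ) (hg : 1 ≤ g) (τ : Matrix (Fin g) (Fin g) ℂ)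
    (hsymm : τ.IsSymm)
    (hpos : (Matrix.of fun i j => (τ i j).im).PosDef) :
    (∀ z₀ : Fin g → ℂ,
        (∀ j, (Complex.exp (z₀ j)).im = 0 ∧ (Complex.exp (τ.mulVec z₀ j)).im = 0) →
        ∃ ε > (0 : ℝ), ∀ z : Fin g → ℂ,
          (∀ j, (Complex.exp (z j)).im = 0 ∧ (Complex.exp (τ.mulVec z j)).im = 0) →
          ‖z - z₀‖ < ε → z = z₀) ∧
    (∃ ε > (0 : ℝ), ∀ z : Fin g → ℂ,
        (∀ j, (Complex.exp (z j)).im = 0 ∧ (Complex.exp (τ.mulVec z j)).im = 0) →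
        ‖z‖ < ε → z = 0) := by
  obtain ⟨ε, hε, hkey⟩ := key_zero g τ hpos
  constructor
  · intro z₀ hz₀
    refine ⟨ε, hε, fun z hz hlt => ?_⟩
    have hsub : ∀ j, (Complex.exp ((z - z₀) j)).im = 0 ∧
        (Complex.exp (τ.mulVec (z - z₀) j)).im = 0 := by
      intro j
      constructor
      · exact exp_sub_im_zero (hz j).1 (hz₀ j).1
      · rw [Matrix.mulVec_sub]
        exact exp_sub_im_zero (hz j).2 (hz₀ j).2
    have := hkey (z - z₀) hsub hlt
    exact sub_eq_zero.1 this
  · exact ⟨ε, hε, hkey⟩
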